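/- If 𝒜ℐ₁ ≼_r 𝒜ℐ₂ (r is a semantic refinement mapping from 𝒜ℐ₁ to 𝒜ℐ₂), then for every machine M: if M is FTA-compliant with 𝒜ℐ₁, then r(M) is FTA-compliant with 𝒜ℐ₂. -/
import Mathlib


structure Machine (S A D O : Type) where
  s0 : S
  step : S → A → S
  dom : A → D
  obs : D → S → O

namespace Machine

def run {S A D O : Type} (M : Machine S A D O) (α : List A) : S :=
  α.foldl M.step M.s0

end Machine
open Classical in
/-- The machine `r(M)`: same states and transitions, domains `D₂`, domain
function `r ∘ dom`, and observation of `u ∈ D₂` the tuple of observations of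
the domains in `r⁻¹(u)` (encoded as a partial function on `D₁`). -/
noncomputable def rMachine {S A D₁ D₂ O : Type} (M : Machine S A D₁ O) (r : D₁ → D₂) :
    Machine S A D₂ (D₁ → Option O) where
  s0 := M.s0
  step := M.step
  dom := r ∘ M.dom
  obs := fun u s v => if r v = u then some (M.obs v s) else none
/-- An extended architecture: `edge u v = none` means no edge, `edge u v = some none`
means an edge labelled `⊤`, and `edge u v = some (some f)` means an edge labelled by
the filter-function name `f`.  There is at most one label per ordered pair by
construction, and the relation is reflexive with label `⊤`. -/
structure ExtArch (D L : Type) where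
  edge : D → D → Option (Option L)
  refl : ∀ u, edge u u = some none

/-- Values of the `tf` function and of filter-function interpretations:
`eps` is the empty value ε, `base v` an arbitrary basic value, and
`pair σ a` the pair `(σ, a)` of a `tf` value and an action. -/
inductive TFVal (A V : Type) where
  | eps : TFVal A V
  | base : V → TFVal A V
  | pair : List (TFVal A V) → A → TFVal A V

/-- `σ ⌢ x`: appends `x` as a single new last element unless `x = ε`. -/
def snoc' {A V : Type} (σ : List (TFVal A V)) : TFVal A V → List (TFVal A V)
  | .eps => σ
  | x => σ ++ [x]

/-- `tf`, computed on the reversed action sequence. -/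
def tfR {A D L V : Type} (Arch : ExtArch D L) (dm : A → D)
    (I : L → List A → A → TFVal A V) : List A → D → List (TFVal A V)
  | [], _ => []
  | a :: ρ, u =>
    match Arch.edge (dm a) u with
    | none => tfR Arch dm I ρ u
    | some none => tfR Arch dm I ρ u ++ [TFVal.pair (tfR Arch dm I ρ (dm a)) a]
    | some (some f) => snoc' (tfR Arch dm I ρ u) (I f ρ.reverse a)

/-- `tf Arch dm I α u` : maximal information domain `u` is permitted to have after `α`. -/
def tf {A D L V : Type} (Arch : ExtArch D L) (dm : A → D)
    (I : L → List A → A → TFVal A V) (α : List A) (u : D) : List (TFVal A V) :=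
  tfR Arch dm I α.reverse u

/-- `inF Arch dm I α a u` : the information `in_{dom(a),u}(α, a)` transmitted to `u`
when action `a` is performed after `α`. -/
def inF {A D L V : Type} (Arch : ExtArch D L) (dm : A → D)
    (I : L → List A → A → TFVal A V) (α : List A) (a : A) (u : D) : TFVal A V :=
  match Arch.edge (dm a) u with
  | none => TFVal.eps
  | some none => TFVal.pair (tf Arch dm I α (dm a)) a
  | some (some f) => I f α a
/-- FTA-compliance of a machine with an interpreted extended architecture
(whose actions, domains and domain function are those of the machine). -/
def FTACompliant {S A D O L V : Type} (M : Machine S A D O) (Arch : ExtArch D L)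
    (I : L → List A → A → TFVal A V) : Prop :=
  ∀ (u : D) (α α' : List A), tf Arch M.dom I α u = tf Arch M.dom I α' u →
    M.obs u (M.run α) = M.obs u (M.run α')
/-- `r` is a semantic refinement mapping from `(A₁, dm₁, I₁)` to `(A₂, dm₂, I₂)`. -/
def SemRef {A D₁ D₂ L₁ L₂ V₁ V₂ : Type} (A₁ : ExtArch D₁ L₁) (dm₁ : A → D₁)
    (I₁ : L₁ → List A → A → TFVal A V₁) (A₂ : ExtArch D₂ L₂) (dm₂ : A → D₂)
    (I₂ : L₂ → List A → A → TFVal A V₂) (r : D₁ → D₂) : Prop :=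
  Function.Surjective r ∧ dm₂ = r ∘ dm₁ ∧
    ∀ (u : D₁) (α β : List A),
      tf A₂ dm₂ I₂ α (r u) = tf A₂ dm₂ I₂ β (r u) →
        tf A₁ dm₁ I₁ α u = tf A₁ dm₁ I₁ β u

/-- if `r` is a semantic refinement mapping from `𝒜ℐ₁` to `𝒜ℐ₂`,
then FTA-compliance of `M` with `𝒜ℐ₁` implies FTA-compliance of `r(M)` with
`𝒜ℐ₂`. -/
theorem statement14 {S A D₁ D₂ O L₁ L₂ V₁ V₂ : Type} (M : Machine S A D₁ O)
    (A₁ : ExtArch D₁ L₁) (I₁ : L₁ → List A → A → TFVal A V₁)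
    (A₂ : ExtArch D₂ L₂) (dm₂ : A → D₂) (I₂ : L₂ → List A → A → TFVal A V₂)
    (r : D₁ → D₂)
    (href : SemRef A₁ M.dom I₁ A₂ dm₂ I₂ r)
    (hFTA : FTACompliant M A₁ I₁) :
    FTACompliant (rMachine M r) A₂ I₂ := by
  obtain ⟨hsurj, hdm, hrefl⟩ := href
  intro u α α' htf
  have hdom : (rMachine M r).dom = dm₂ := by
    simp [rMachine, hdm]
  rw [hdom] at htf
  funext v
  simp only [rMachine, Machine.run]
  by_cases hv : r v = u
  · simp only [hv, if_pos rfl]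
    have h1 := hrefl v α α' (by rw [hv]; exact htf)
    have := hFTA v α α' h1
    simp [Machine.run] at this
    rw [this]
  · simp [hv]
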